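/- arXiv:2212.09491 — 3 statements merged into one kernel-verified Lean document; each statement's English description precedes it below -/
import Mathlib

section
/- Let V satisfy A₋₁V² + A₀V + A₁ = 0, and suppose I − G̃V is invertible. Set Y = V(I − G̃V)⁻¹ and Z = (I − G̃V)·V·(I − G̃V)⁻¹. Then M̃·[Y; I]·Z = Ñ·[Y; I], where M̃ = [[G̃, I], [−R(G̃), −(A₀ + A₁G̃)]], R(G̃) = A₁G̃² + A₀G̃ + A₋₁, and Ñ = [[I, 0], [0, A₁]]. -/
open Matrix

/-- Dual invariant-subspace relation for the defect pencil:
with `Y = V(I − G̃V)⁻¹` and `Z = (I − G̃V)V(I − G̃V)⁻¹`, one has `M̃ [Y; I] Z = Ñ [Y; I]`. -/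
theorem stmt9 {n : ℕ} (Am1 A0 A1 Gt V Y Z : Matrix (Fin n) (Fin n) ℝ)
    (hV : Am1 * V ^ 2 + A0 * V + A1 = 0)
    (hinv : IsUnit (1 - Gt * V).det)
    (hY : Y = V * (1 - Gt * V)⁻¹)
    (hZ : Z = (1 - Gt * V) * V * (1 - Gt * V)⁻¹) :
    fromBlocks Gt 1 (-(A1 * Gt ^ 2 + A0 * Gt + Am1)) (-(A0 + A1 * Gt)) *
        fromRows Y (1 : Matrix (Fin n) (Fin n) ℝ) * Z =
      fromBlocks 1 (0 : Matrix (Fin n) (Fin n) ℝ) (0 : Matrix (Fin n) (Fin n) ℝ) A1 * fromRows Y (1 : Matrix (Fin n) (Fin n) ℝ) := by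
  have h1 : (1 - Gt * V) * (1 - Gt * V)⁻¹ = 1 := mul_nonsing_inv _ hinv
  have h2 : (1 - Gt * V)⁻¹ * (1 - Gt * V) = 1 := nonsing_inv_mul _ hinv
  have hA1 : A1 = -(Am1 * V ^ 2 + A0 * V) := eq_neg_of_add_eq_zero_right hV
  subst hY hZ
  rw [fromBlocks_mul_fromRows, fromRows_mul, fromBlocks_mul_fromRows,
    fromRows_ext_iff]
  constructor
  · have expand : (Gt * (V * (1 - Gt * V)⁻¹) + 1 * 1) * ((1 - Gt * V) * V * (1 - Gt * V)⁻¹)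
        = Gt * V * ((1 - Gt * V)⁻¹ * (1 - Gt * V)) * V * (1 - Gt * V)⁻¹
          + (1 - Gt * V) * V * (1 - Gt * V)⁻¹ := by noncomm_ring
    rw [expand, h2]
    noncomm_ring
  · have expand : (-(A1 * Gt ^ 2 + A0 * Gt + Am1) * (V * (1 - Gt * V)⁻¹) + -(A0 + A1 * Gt) * 1) *
        ((1 - Gt * V) * V * (1 - Gt * V)⁻¹)
        = -(A1 * Gt ^ 2 + A0 * Gt + Am1) * V * ((1 - Gt * V)⁻¹ * (1 - Gt * V)) * V * (1 - Gt * V)⁻¹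
          + -(A0 + A1 * Gt) * ((1 - Gt * V) * V * (1 - Gt * V)⁻¹) := by noncomm_ring
    rw [expand, h2]
    have step : -(A1 * Gt ^ 2 + A0 * Gt + Am1) * V * 1 * V * (1 - Gt * V)⁻¹
        + -(A0 + A1 * Gt) * ((1 - Gt * V) * V * (1 - Gt * V)⁻¹)
        = A1 * ((1 - Gt * V) * (1 - Gt * V)⁻¹) := by
      rw [hA1]; noncomm_ring
    rw [step, h1]
    noncomm_ring
end

section
/- Suppose A₀ + A₁G̃ is invertible and H satisfies A₁H² + A₁HG̃ + (A₀ + A₁G̃)H + R(G̃) = 0 with R(G̃) = A₁G̃² + A₀G̃ + A₋₁. Let S = (A₀ + A₁G̃)⁻¹ and set M̌ = [[−SA₋₁, 0], [SR(G̃), I]], Ň = [[I, SA₁], [0, −SA₁]]. Then M̌·[I; H] = Ň·[I; H]·(G̃ + H). -/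
open Matrix

/-- SSF-I form of the defect pencil: with `S = (A₀ + A₁G̃)⁻¹`,
`M̌ = [[−SA₋₁, 0], [SR(G̃), I]]`, `Ň = [[I, SA₁], [0, −SA₁]]`, if `H` solves the defect
equation then `M̌ [I; H] = Ň [I; H] (G̃ + H)`. -/
theorem stmt10 {n : ℕ} (Am1 A0 A1 Gt H S : Matrix (Fin n) (Fin n) ℝ)
    (hinv : IsUnit (A0 + A1 * Gt).det)
    (hS : S = (A0 + A1 * Gt)⁻¹)
    (h : A1 * H ^ 2 + A1 * H * Gt + (A0 + A1 * Gt) * H +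
          (A1 * Gt ^ 2 + A0 * Gt + Am1) = 0) :
    fromBlocks (-(S * Am1)) (0 : Matrix (Fin n) (Fin n) ℝ) (S * (A1 * Gt ^ 2 + A0 * Gt + Am1)) 1 *
        fromRows (1 : Matrix (Fin n) (Fin n) ℝ) H =
      fromBlocks 1 (S * A1) (0 : Matrix (Fin n) (Fin n) ℝ) (-(S * A1)) * fromRows (1 : Matrix (Fin n) (Fin n) ℝ) H * (Gt + H) := by
  have key : S * (A0 + A1 * Gt) = 1 := by
    rw [hS]; exact nonsing_inv_mul _ hinv
  have hmain : S * (A1 * H ^ 2 + A1 * H * Gt + (A0 + A1 * Gt) * H +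
      (A1 * Gt ^ 2 + A0 * Gt + Am1)) = 0 := by rw [h, mul_zero]
  rw [fromBlocks_mul_fromRows, fromBlocks_mul_fromRows, fromRows_mul, fromRows_inj.eq_iff]
  constructor
  · -- top: -(S*Am1) = (1 + S*A1*H) * (Gt + H)
    have expand : (1 * 1 + S * A1 * H) * (Gt + H) =
        Gt + H + S * (A1 * H * Gt + A1 * H ^ 2) := by noncomm_ring
    have h2 : S * (A1 * H * Gt + A1 * H ^ 2) =
        -(H + S * (A1 * Gt ^ 2 + A0 * Gt + Am1)) := by
      have := hmain
      have hSH : S * ((A0 + A1 * Gt) * H) = H := by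
        rw [← mul_assoc, key, one_mul]
      calc S * (A1 * H * Gt + A1 * H ^ 2)
          = S * (A1 * H ^ 2 + A1 * H * Gt + (A0 + A1 * Gt) * H +
              (A1 * Gt ^ 2 + A0 * Gt + Am1)) - S * ((A0 + A1 * Gt) * H)
              - S * (A1 * Gt ^ 2 + A0 * Gt + Am1) := by noncomm_ring
        _ = -(H + S * (A1 * Gt ^ 2 + A0 * Gt + Am1)) := by
            rw [hmain, hSH]; noncomm_ring
    have h3 : Gt - S * (A1 * Gt ^ 2 + A0 * Gt + Am1) = -(S * Am1) := by
      have : S * (A1 * Gt ^ 2 + A0 * Gt + Am1) = S * ((A0 + A1 * Gt) * Gt) + S * Am1 := by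
        noncomm_ring
      rw [this, ← mul_assoc, key, one_mul]; noncomm_ring
    rw [expand, h2, ← h3]; noncomm_ring
  · -- bottom: S*R + H = (0*1 + -(S*A1)*H) * (Gt + H)
    have hSH : S * ((A0 + A1 * Gt) * H) = H := by
      rw [← mul_assoc, key, one_mul]
    have : (0 * 1 + -(S * A1) * H) * (Gt + H) =
        -(S * (A1 * H * Gt + A1 * H ^ 2)) := by noncomm_ring
    rw [this]
    have : S * (A1 * H * Gt + A1 * H ^ 2) =
        S * (A1 * H ^ 2 + A1 * H * Gt + (A0 + A1 * Gt) * H +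
            (A1 * Gt ^ 2 + A0 * Gt + Am1)) - S * ((A0 + A1 * Gt) * H)
            - S * (A1 * Gt ^ 2 + A0 * Gt + Am1) := by noncomm_ring
    rw [this, hmain, hSH]; noncomm_ring
end

section
/- Let G be a row-stochastic n×n matrix (G𝟏 = 𝟏) and u ∈ ℝⁿ with uᵀ𝟏 = 1. Then the characteristic polynomial of G − 𝟏uᵀ equals λ·(characteristic polynomial of G)/(λ − 1); equivalently, the eigenvalues of G − 𝟏uᵀ are those of G with the eigenvalue 1 (from the eigenvector 𝟏) replaced by 0. -/
open Matrix Polynomial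

lemma eval_charpoly_aux {n : ℕ} (M : Matrix (Fin n) (Fin n) ℝ) (t : ℝ) :
    (M.charpoly).eval t = (t • (1 : Matrix (Fin n) (Fin n) ℝ) - M).det := by
  rw [Matrix.charpoly, eval_det]
  congr 1
  ext i j
  rw [matPolyEquiv_eval, Matrix.charmatrix_apply]
  by_cases h : i = j <;>
    simp [h, Matrix.one_apply, Matrix.diagonal_apply, Matrix.smul_apply, Matrix.sub_apply]

/-- Brauer-type shift: If `G𝟏 = 𝟏` and `uᵀ𝟏 = 1`, then
`(λ − 1)·charpoly(G − 𝟏uᵀ) = λ·charpoly(G)`, i.e. the eigenvalues of `G − 𝟏uᵀ` are those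
of `G` with the eigenvalue `1` replaced by `0`. -/
theorem stmt12 {n : ℕ} (G : Matrix (Fin n) (Fin n) ℝ) (u : Fin n → ℝ)
    (hG : G.mulVec (fun _ => (1 : ℝ)) = fun _ => (1 : ℝ))
    (hu : u ⬝ᵥ (fun _ => (1 : ℝ)) = 1) :
    (X - 1) * (G - vecMulVec (fun _ => (1 : ℝ)) u).charpoly = X * G.charpoly := by
  rcases Nat.eq_zero_or_pos n with hn | hn
  · exfalso
    subst hn
    simp [dotProduct] at hu
  apply Polynomial.eq_of_infinite_eval_eq
  have hroots : {t : ℝ | (G.charpoly).IsRoot t}.Finite :=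
    Polynomial.finite_setOf_isRoot (G.charpoly_monic).ne_zero
  apply (hroots.infinite_compl).mono
  intro t ht
  simp only [Set.mem_compl_iff, Set.mem_setOf_eq, Polynomial.IsRoot] at ht
  -- set up
  set M : Matrix (Fin n) (Fin n) ℝ := t • 1 - G with hM
  have hdetM : M.det ≠ 0 := by
    rw [← eval_charpoly_aux] at *; exact ht
  have hdet : IsUnit M.det := isUnit_iff_ne_zero.mpr hdetM
  have hMe : M *ᵥ (fun _ => (1 : ℝ)) = (t - 1) • (fun _ => (1 : ℝ)) := by
    rw [hM, Matrix.sub_mulVec, hG, Matrix.smul_mulVec, Matrix.one_mulVec]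
    funext i
    simp [sub_smul]
  have hinv : M⁻¹ *ᵥ (M *ᵥ (fun _ => (1 : ℝ))) = (fun _ => (1 : ℝ)) := by
    rw [Matrix.mulVec_mulVec, Matrix.nonsing_inv_mul _ hdet, Matrix.one_mulVec]
  have ht1 : t ≠ 1 := by
    intro h
    subst h
    rw [hMe] at hinv
    simp only [sub_self, zero_smul, Matrix.mulVec_zero] at hinv
    have := congrFun hinv.symm ⟨0, hn⟩
    simp at this
  have hMinv1 : M⁻¹ *ᵥ (fun _ => (1 : ℝ)) = (t - 1)⁻¹ • (fun _ => (1 : ℝ)) := by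
    have h2 : (t - 1) • (M⁻¹ *ᵥ (fun _ => (1 : ℝ))) = (fun _ => (1 : ℝ)) := by
      rw [← Matrix.mulVec_smul, ← hMe, hinv]
    have ht1' : t - 1 ≠ 0 := sub_ne_zero.mpr ht1
    calc M⁻¹ *ᵥ (fun _ => (1 : ℝ))
        = (t - 1)⁻¹ • ((t - 1) • (M⁻¹ *ᵥ (fun _ => (1 : ℝ)))) := by
          rw [smul_smul, inv_mul_cancel₀ ht1', one_smul]
      _ = (t - 1)⁻¹ • (fun _ => (1 : ℝ)) := by rw [h2]
  -- rewrite the target matrix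
  have hB : t • (1 : Matrix (Fin n) (Fin n) ℝ) - (G - vecMulVec (fun _ => (1 : ℝ)) u)
      = M + Matrix.replicateCol Unit (fun _ => (1 : ℝ)) * Matrix.replicateRow Unit u := by
    rw [← Matrix.vecMulVec_eq, hM]; abel
  have hdetB : ((G - vecMulVec (fun _ => (1 : ℝ)) u).charpoly).eval t
      = M.det * (1 + (t - 1)⁻¹) := by
    rw [eval_charpoly_aux, hB, Matrix.det_add_replicateCol_mul_replicateRow hdet]
    congr 1
    rw [Matrix.det_unique]
    simp only [Matrix.add_apply, Matrix.one_apply_eq]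
    congr 1
    rw [Matrix.mul_assoc, ← Matrix.replicateCol_mulVec, Matrix.replicateRow_mul_replicateCol_apply, hMinv1]
    simp [hu]
  have ht1' : t - 1 ≠ 0 := sub_ne_zero.mpr ht1
  simp only [Set.mem_setOf_eq, Polynomial.eval_mul, Polynomial.eval_sub, Polynomial.eval_X,
    Polynomial.eval_one]
  rw [hdetB, eval_charpoly_aux, ← hM]
  field_simp
  ring
end
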